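/- Let a, b, r, δ > 0 and let 0 < k < 2a + δ. Let q, q' : [0,∞) → ℝ be continuous nonnegative functions of at most linear growth, and let π, π' : [0,∞) → ℝ be continuous nonnegative functions satisfying, for all t ≥ 0, π(t) = ∫_t^∞ exp(−∫_t^η (2a + δ + (b²/r)π(τ)) dτ)(q(η) + q⁰) dη and π'(t) = ∫_t^∞ exp(−∫_t^η (2a + δ + (b²/r)π'(τ)) dτ)(q'(η) + q⁰) dη, for some q⁰ > 0 (all integrals finite). If sup_{t≥0} e^{-kt}|q(t) − q'(t)| ≤ c < ∞, then sup_{t≥0} e^{-kt}|π(t) − π'(t)| ≤ c/(2a + δ − k). -/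

import Mathlib

open MeasureTheory Set

namespace RiccatiAux

lemma hasDerivAt_primitive {h : ℝ → ℝ} (hc : ContinuousOn h (Ici 0)) {t : ℝ} (ht : 0 < t) :
    HasDerivAt (fun u => ∫ x in (0:ℝ)..u, h x) (h t) t := by
  refine intervalIntegral.integral_hasDerivAt_right
    ((hc.mono (by rw [uIcc_of_le ht.le]; exact Icc_subset_Ici_self)).intervalIntegrable)
    (ContinuousOn.stronglyMeasurableAtFilter isOpen_Ioi (hc.mono Ioi_subset_Ici_self) t ht) ?_
  exact (hc.continuousWithinAt (le_of_lt ht)).continuousAt (Ici_mem_nhds ht)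

lemma continuousOn_primitive' {h : ℝ → ℝ} (hc : ContinuousOn h (Ici 0)) :
    ContinuousOn (fun u => ∫ x in (0:ℝ)..u, h x) (Ici 0) := by
  intro x hx
  have hsub : uIcc (0:ℝ) (x+1) ⊆ Ici 0 := by
    rw [uIcc_of_le (by linarith [mem_Ici.mp hx])]; exact Icc_subset_Ici_self
  have h1 : ContinuousOn (fun u => ∫ s in (0:ℝ)..u, h s) (uIcc 0 (x+1)) :=
    intervalIntegral.continuousOn_primitive_interval
      ((hc.mono hsub).integrableOn_compact (isCompact_uIcc))
  have h2 : ContinuousWithinAt (fun u => ∫ s in (0:ℝ)..u, h s) (uIcc 0 (x+1)) x := by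
    apply h1
    rw [uIcc_of_le (by linarith [mem_Ici.mp hx])]
    exact ⟨mem_Ici.mp hx, by linarith⟩
  refine h2.mono_of_mem_nhdsWithin ?_
  have : uIcc (0:ℝ) (x+1) = Ici 0 ∩ Iic (x+1) := by
    rw [uIcc_of_le (by linarith [mem_Ici.mp hx])]
    exact Ici_inter_Iic.symm
  rw [this]
  exact inter_mem_nhdsWithin _ (Iic_mem_nhds (lt_add_one x))


lemma key_deriv (g u p : ℝ → ℝ) (hg : ContinuousOn g (Ici 0)) (hu : ContinuousOn u (Ici 0))
    (hI : ∀ t ≥ (0:ℝ), IntegrableOn (fun η => Real.exp (-(∫ τ in t..η, g τ)) * u η) (Ioi t))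
    (hp : ∀ t ≥ (0:ℝ), p t = ∫ η in Ioi t, Real.exp (-(∫ τ in t..η, g τ)) * u η)
    {t : ℝ} (ht : 0 < t) : HasDerivAt p (g t * p t - u t) t := by
  set P : ℝ → ℝ := fun x => ∫ τ in (0:ℝ)..x, g τ with hPdef
  set h : ℝ → ℝ := fun η => Real.exp (-(P η)) * u η with hhdef
  have hgInt : ∀ x ≥ (0:ℝ), IntervalIntegrable g MeasureTheory.volume 0 x := fun x hx =>
    (hg.mono (by rw [uIcc_of_le hx]; exact Icc_subset_Ici_self)).intervalIntegrable
  have hPc : ContinuousOn P (Ici 0) := continuousOn_primitive' hg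
  have hhc : ContinuousOn h (Ici 0) :=
    ((Real.continuous_exp.comp_continuousOn hPc.neg).mul hu)
  have hsplit : ∀ s ≥ (0:ℝ), ∀ η ∈ Ioi s,
      Real.exp (-(∫ τ in s..η, g τ)) * u η = Real.exp (P s) * h η := by
    intro s hs η hη
    have hη0 : (0:ℝ) ≤ η := hs.trans (le_of_lt hη)
    have h1 : ∫ τ in s..η, g τ = P η - P s :=
      (intervalIntegral.integral_interval_sub_left (hgInt η hη0) (hgInt s hs)).symm
    have h2 : -(P η - P s) = P s + -(P η) := by ring
    rw [h1, h2, Real.exp_add, hhdef]; ring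
  have hhInt : ∀ s ≥ (0:ℝ), IntegrableOn h (Ioi s) := by
    intro s hs
    refine IntegrableOn.congr_fun ((hI s hs).const_mul (Real.exp (-(P s)))) ?_ measurableSet_Ioi
    intro η hη
    dsimp only
    rw [hsplit s hs η hη, ← mul_assoc, ← Real.exp_add]
    simp
  have hpEG : ∀ s ≥ (0:ℝ), p s = Real.exp (P s) * ∫ η in Ioi s, h η := by
    intro s hs
    rw [hp s hs, ← MeasureTheory.integral_const_mul]
    exact setIntegral_congr_fun measurableSet_Ioi (fun η hη => hsplit s hs η hη)
  set G : ℝ → ℝ := fun s => ∫ η in Ioi s, h η with hGdef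
  have hGsplit : ∀ s ≥ (0:ℝ), G s = G 0 - ∫ x in (0:ℝ)..s, h x := by
    intro s hs
    have hunion : Ioc 0 s ∪ Ioi s = Ioi (0:ℝ) := Ioc_union_Ioi_eq_Ioi hs
    have hdis : Disjoint (Ioc (0:ℝ) s) (Ioi s) := Ioc_disjoint_Ioi le_rfl
    have hsum := setIntegral_union hdis measurableSet_Ioi
      ((hhInt 0 le_rfl).mono_set (Ioc_subset_Ioi_self)) (hhInt s hs)
    rw [hunion] at hsum
    rw [intervalIntegral.integral_of_le hs, hGdef]
    simp only []
    rw [show (∫ η in Ioi (0:ℝ), h η) = _ from hsum]; ring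
  have hGd : HasDerivAt G (-(h t)) t := by
    have h1 : HasDerivAt (fun s => G 0 - ∫ x in (0:ℝ)..s, h x) (-(h t)) t :=
      (hasDerivAt_primitive hhc ht).const_sub (G 0)
    refine h1.congr_of_eventuallyEq ?_
    filter_upwards [Ici_mem_nhds ht] with s hs using hGsplit s hs
  have hPd : HasDerivAt P (g t) t := hasDerivAt_primitive hg ht
  have hEd : HasDerivAt (fun s => Real.exp (P s)) (Real.exp (P t) * g t) t := hPd.exp
  have hprod := hEd.mul hGd
  have hfinal : HasDerivAt p (Real.exp (P t) * g t * G t + Real.exp (P t) * -(h t)) t := by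
    refine hprod.congr_of_eventuallyEq ?_
    filter_upwards [Ici_mem_nhds ht] with s hs using hpEG s hs
  convert hfinal using 1
  have h1 : Real.exp (P t) * G t = p t := (hpEG t ht.le).symm
  have h2 : Real.exp (P t) * h t = u t := by
    rw [hhdef]; simp only []
    rw [← mul_assoc, ← Real.exp_add]; simp
  calc g t * p t - u t = g t * (Real.exp (P t) * G t) - Real.exp (P t) * h t := by rw [h1, h2]
    _ = _ := by ring


lemma setIntegral_Ioi_split {V : ℝ → ℝ} (hV : IntegrableOn V (Ioi 0)) {s : ℝ} (hs : 0 ≤ s) :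
    ∫ η in Ioi s, V η = (∫ η in Ioi 0, V η) - ∫ x in (0:ℝ)..s, V x := by
  have hdis : Disjoint (Ioc (0:ℝ) s) (Ioi s) := Ioc_disjoint_Ioi le_rfl
  have hsum := setIntegral_union hdis measurableSet_Ioi
    (hV.mono_set Ioc_subset_Ioi_self) (hV.mono_set (Ioi_subset_Ioi hs))
  rw [Ioc_union_Ioi_eq_Ioi hs] at hsum
  rw [intervalIntegral.integral_of_le hs, hsum]; ring

lemma tendsto_tail {V : ℝ → ℝ} (hV : IntegrableOn V (Ioi 0)) :
    Filter.Tendsto (fun s => ∫ η in Ioi s, V η) Filter.atTop (nhds 0) := by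
  have h1 := MeasureTheory.intervalIntegral_tendsto_integral_Ioi 0 hV Filter.tendsto_id
  have h2 : Filter.Tendsto (fun s => (∫ η in Ioi (0:ℝ), V η) - ∫ x in (0:ℝ)..s, V x)
      Filter.atTop (nhds ((∫ η in Ioi (0:ℝ), V η) - ∫ η in Ioi (0:ℝ), V η)) :=
    tendsto_const_nhds.sub h1
  rw [sub_self] at h2
  refine h2.congr' ?_
  filter_upwards [Filter.eventually_ge_atTop (0:ℝ)] with s hs
  exact (setIntegral_Ioi_split hV hs).symm

lemma key_growth (l : ℝ) (g u v p : ℝ → ℝ)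
    (hgl : ∀ x ≥ (0:ℝ), l ≤ g x) (hg : ContinuousOn g (Ici 0))
    (huv : ∀ x ≥ (0:ℝ), u x ≤ v x) (hun : ∀ x ≥ (0:ℝ), 0 ≤ u x)
    (hvInt : IntegrableOn (fun η => Real.exp (-l*η) * v η) (Ioi 0))
    (hI : ∀ t ≥ (0:ℝ), IntegrableOn (fun η => Real.exp (-(∫ τ in t..η, g τ)) * u η) (Ioi t))
    (hp : ∀ t ≥ (0:ℝ), p t = ∫ η in Ioi t, Real.exp (-(∫ τ in t..η, g τ)) * u η)
    {s : ℝ} (hs : 0 ≤ s) :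
    Real.exp (-l*s) * p s ≤ ∫ η in Ioi s, Real.exp (-l*η) * v η := by
  have key : p s ≤ Real.exp (l*s) * ∫ η in Ioi s, Real.exp (-l*η) * v η := by
    rw [hp s hs, ← MeasureTheory.integral_const_mul]
    refine setIntegral_mono_on (hI s hs)
      ((hvInt.mono_set (Ioi_subset_Ioi hs)).const_mul (Real.exp (l*s))) measurableSet_Ioi ?_
    intro η hη
    have hη0 : (0:ℝ) ≤ η := hs.trans (le_of_lt hη)
    have hgint : IntervalIntegrable g MeasureTheory.volume s η :=
      (hg.mono (by rw [uIcc_of_le (le_of_lt hη)]; exact fun x hx => hs.trans hx.1)).intervalIntegrable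
    have hmono : l * (η - s) ≤ ∫ τ in s..η, g τ := by
      have := intervalIntegral.integral_mono_on (le_of_lt hη)
        (intervalIntegrable_const) hgint (fun x hx => hgl x (hs.trans hx.1))
      rwa [intervalIntegral.integral_const, smul_eq_mul, mul_comm] at this
    have hexp : Real.exp (-(∫ τ in s..η, g τ)) ≤ Real.exp (l*s) * Real.exp (-l*η) := by
      rw [← Real.exp_add]
      apply Real.exp_le_exp.mpr
      linarith
    show Real.exp (-(∫ τ in s..η, g τ)) * u η ≤ Real.exp (l*s) * (Real.exp (-l*η) * v η)
    calc Real.exp (-(∫ τ in s..η, g τ)) * u η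
        ≤ (Real.exp (l*s) * Real.exp (-l*η)) * v η :=
          mul_le_mul hexp (huv η hη0) (hun η hη0) (by positivity)
      _ = Real.exp (l*s) * (Real.exp (-l*η) * v η) := by ring
  calc Real.exp (-l*s) * p s
      ≤ Real.exp (-l*s) * (Real.exp (l*s) * ∫ η in Ioi s, Real.exp (-l*η) * v η) :=
        mul_le_mul_of_nonneg_left key (le_of_lt (Real.exp_pos _))
    _ = _ := by rw [← mul_assoc, ← Real.exp_add, neg_mul, neg_add_cancel, Real.exp_zero, one_mul]


lemma V_integrable (l C q0 : ℝ) (hl : 0 < l) (hC : 0 ≤ C) (hq0 : 0 ≤ q0) :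
    IntegrableOn (fun η => Real.exp (-l*η) * (C*(1+η) + q0)) (Ioi 0) := by
  have hM : ∀ η ∈ Ioi (0:ℝ), ‖Real.exp (-l*η) * (C*(1+η) + q0)‖ ≤
      (C + q0 + 2*C/l) * Real.exp (-(l/2)*η) := by
    intro η hη
    have hη0 : (0:ℝ) < η := hη
    set E := Real.exp (-(l/2)*η) with hEdef
    have hE : 0 < E := Real.exp_pos _
    have hE1 : E ≤ 1 := Real.exp_le_one_iff.mpr (by nlinarith)
    have hx : (l/2)*η ≤ Real.exp ((l/2)*η) := by
      have := Real.add_one_le_exp ((l/2)*η); linarith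
    have hηE : η * E ≤ 2/l := by
      have h2 : η ≤ (2/l) * Real.exp ((l/2)*η) := by
        rw [div_mul_eq_mul_div, le_div_iff₀ hl]
        nlinarith
      have h3 : Real.exp ((l/2)*η) * E = 1 := by
        rw [hEdef, ← Real.exp_add]; ring_nf; exact Real.exp_zero
      calc η * E ≤ ((2/l) * Real.exp ((l/2)*η)) * E :=
            mul_le_mul_of_nonneg_right h2 hE.le
        _ = (2/l) * (Real.exp ((l/2)*η) * E) := by ring
        _ = 2/l := by rw [h3, mul_one]
    have hEE : Real.exp (-l*η) = E * E := by
      rw [hEdef, ← Real.exp_add]; ring_nf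
    have hnn : (0:ℝ) ≤ C*(1+η) + q0 := by nlinarith
    rw [Real.norm_eq_abs, abs_of_nonneg (mul_nonneg (Real.exp_pos _).le hnn), hEE]
    have hstep : E * (C*(1+η) + q0) ≤ C + q0 + 2*C/l := by
      have h4 : E * (C*(1+η) + q0) = (C+q0) * E + C * (η * E) := by ring
      have h5 : (C+q0) * E ≤ C + q0 := by nlinarith
      have h6 : C * (η * E) ≤ C * (2/l) := mul_le_mul_of_nonneg_left hηE hC
      rw [h4]
      have : C * (2/l) = 2*C/l := by ring
      linarith [h6.trans_eq this]
    calc E * E * (C*(1+η) + q0) = E * (E * (C*(1+η) + q0)) := by ring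
      _ = (E * (C*(1+η) + q0)) * E := by ring
      _ ≤ (C + q0 + 2*C/l) * E := mul_le_mul_of_nonneg_right hstep hE.le
  refine Integrable.mono'
    ((exp_neg_integrableOn_Ioi 0 (by positivity : (0:ℝ) < l/2)).const_mul (C + q0 + 2*C/l))
    (Continuous.aestronglyMeasurable (by fun_prop)) ?_
  exact (ae_restrict_iff' measurableSet_Ioi).mpr (Filter.Eventually.of_forall hM)

end RiccatiAux

open Set

open RiccatiAux Filter in
/-- Lipschitz-type estimate in the weighted norm for the Riccati solutions:
if `sup_{t≥0} e^{-kt}|q(t) − q'(t)| ≤ c` then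
`sup_{t≥0} e^{-kt}|π(t) − π'(t)| ≤ c/(2a + δ − k)`. -/
theorem riccati_weighted_norm_estimate (a b r δ k q0 c : ℝ)
    (ha : 0 < a) (hb : 0 < b) (hr : 0 < r) (hδ : 0 < δ) (hq0 : 0 < q0)
    (hk : 0 < k) (hk2 : k < 2 * a + δ) (hc : 0 ≤ c)
    (q q' π π' : ℝ → ℝ)
    (hqc : ContinuousOn q (Set.Ici 0)) (hq'c : ContinuousOn q' (Set.Ici 0))
    (hqnn : ∀ t ≥ (0 : ℝ), 0 ≤ q t) (hq'nn : ∀ t ≥ (0 : ℝ), 0 ≤ q' t)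
    (hqgrow : ∃ C > (0 : ℝ), ∀ t ≥ (0 : ℝ), q t ≤ C * (1 + t))
    (hq'grow : ∃ C > (0 : ℝ), ∀ t ≥ (0 : ℝ), q' t ≤ C * (1 + t))
    (hπc : ContinuousOn π (Set.Ici 0)) (hπ'c : ContinuousOn π' (Set.Ici 0))
    (hπnn : ∀ t ≥ (0 : ℝ), 0 ≤ π t) (hπ'nn : ∀ t ≥ (0 : ℝ), 0 ≤ π' t)
    (hInt : ∀ t ≥ (0 : ℝ), IntegrableOn
      (fun η => Real.exp (-(∫ τ in t..η, (2 * a + δ + (b ^ 2 / r) * π τ))) *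
        (q η + q0)) (Set.Ioi t))
    (hInt' : ∀ t ≥ (0 : ℝ), IntegrableOn
      (fun η => Real.exp (-(∫ τ in t..η, (2 * a + δ + (b ^ 2 / r) * π' τ))) *
        (q' η + q0)) (Set.Ioi t))
    (heq : ∀ t ≥ (0 : ℝ), π t = ∫ η in Set.Ioi t,
      Real.exp (-(∫ τ in t..η, (2 * a + δ + (b ^ 2 / r) * π τ))) * (q η + q0))
    (heq' : ∀ t ≥ (0 : ℝ), π' t = ∫ η in Set.Ioi t,
      Real.exp (-(∫ τ in t..η, (2 * a + δ + (b ^ 2 / r) * π' τ))) * (q' η + q0))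
    (hqq' : ∀ t ≥ (0 : ℝ), Real.exp (-k * t) * |q t - q' t| ≤ c) :
    ∀ t ≥ (0 : ℝ), Real.exp (-k * t) * |π t - π' t| ≤ c / (2 * a + δ - k) := by
  obtain ⟨C, hC, hCq⟩ := hqgrow
  obtain ⟨C', hC', hC'q⟩ := hq'grow
  have hl0 : (0:ℝ) < 2*a+δ := by linarith
  have hβ0 : (0:ℝ) < b^2/r := by positivity
  set l : ℝ := 2*a+δ with hldef
  set β : ℝ := b^2/r with hβdef
  have hlk : 0 < l - k := by linarith
  -- continuity
  have hgc : ContinuousOn (fun τ => l + β * π τ) (Ici 0) :=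
    continuousOn_const.add (continuousOn_const.mul hπc)
  have hg'c : ContinuousOn (fun τ => l + β * π' τ) (Ici 0) :=
    continuousOn_const.add (continuousOn_const.mul hπ'c)
  have huc : ContinuousOn (fun η => q η + q0) (Ici 0) := hqc.add continuousOn_const
  have hu'c : ContinuousOn (fun η => q' η + q0) (Ici 0) := hq'c.add continuousOn_const
  -- derivatives of π and π'
  have hπd : ∀ x : ℝ, 0 < x → HasDerivAt π ((l + β * π x) * π x - (q x + q0)) x :=
    fun x hx => key_deriv _ _ _ hgc huc hInt heq hx
  have hπ'd : ∀ x : ℝ, 0 < x → HasDerivAt π' ((l + β * π' x) * π' x - (q' x + q0)) x :=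
    fun x hx => key_deriv _ _ _ hg'c hu'c hInt' heq' hx
  -- the weight W
  have hwc : ContinuousOn (fun τ => l + β * (π τ + π' τ)) (Ici 0) :=
    continuousOn_const.add (continuousOn_const.mul (hπc.add hπ'c))
  set W : ℝ → ℝ := fun x => Real.exp (-(∫ τ in (0:ℝ)..x, (l + β * (π τ + π' τ)))) with hWdef
  have hWpos : ∀ x, 0 < W x := fun x => Real.exp_pos _
  have hWc : ContinuousOn W (Ici 0) :=
    Real.continuous_exp.comp_continuousOn ((continuousOn_primitive' hwc).neg)
  have hWd : ∀ x : ℝ, 0 < x → HasDerivAt W (-(l + β * (π x + π' x)) * W x) x := by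
    intro x hx
    have h1 := ((hasDerivAt_primitive hwc hx).neg).exp
    simpa [hWdef, mul_comm] using h1
  have hwint : ∀ x ≥ (0:ℝ), IntervalIntegrable (fun τ => l + β*(π τ + π' τ))
      MeasureTheory.volume 0 x := fun x hx =>
    (hwc.mono (by rw [uIcc_of_le hx]; exact Icc_subset_Ici_self)).intervalIntegrable
  have hWsplit : ∀ t₀ s : ℝ, 0 ≤ t₀ → t₀ ≤ s →
      W s = W t₀ * Real.exp (-(∫ τ in t₀..s, (l + β*(π τ + π' τ)))) := by
    intro t₀ s ht₀ hts
    have hs0 : (0:ℝ) ≤ s := ht₀.trans hts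
    have hadd := intervalIntegral.integral_add_adjacent_intervals
      (hwint t₀ ht₀) ((hwint t₀ ht₀).symm.trans (hwint s hs0))
    rw [hWdef]
    dsimp only
    rw [← hadd, neg_add, Real.exp_add]
  have hWdecay : ∀ t₀ s : ℝ, 0 ≤ t₀ → t₀ ≤ s → W s ≤ W t₀ * Real.exp (-l*(s-t₀)) := by
    intro t₀ s ht₀ hts
    rw [hWsplit t₀ s ht₀ hts]
    refine mul_le_mul_of_nonneg_left (Real.exp_le_exp.mpr ?_) (hWpos t₀).le
    have hmono := intervalIntegral.integral_mono_on (f := fun _ => l)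
      (g := fun τ => l + β*(π τ + π' τ)) hts intervalIntegrable_const
      ((hwint t₀ ht₀).symm.trans (hwint s (ht₀.trans hts)))
      (fun x hx => by
        show l ≤ l + β * (π x + π' x)
        have hx0 : (0:ℝ) ≤ x := ht₀.trans hx.1
        have := mul_nonneg hβ0.le (add_nonneg (hπnn x hx0) (hπ'nn x hx0))
        linarith)
    rw [intervalIntegral.integral_const, smul_eq_mul] at hmono
    have h2 := neg_le_neg hmono
    beta_reduce at h2
    linarith [h2]
    -- derivative of the product Φ = (π - π') W
  have hΦd : ∀ x : ℝ, 0 < x →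
      HasDerivAt (fun y => (π y - π' y) * W y) (-((q x - q' x) * W x)) x := by
    intro x hx
    have h1 := ((hπd x hx).sub (hπ'd x hx)).mul (hWd x hx)
    refine h1.congr_deriv ?_
    simp only [Pi.sub_apply]
    ring
  intro t ht
  rw [ge_iff_le] at ht
  -- the fundamental identity
  have hid : ∀ s, t ≤ s → (π t - π' t) * W t
      = (π s - π' s) * W s + ∫ η in t..s, (q η - q' η) * W η := by
    intro s hts
    have hIccsub : Icc t s ⊆ Ici (0:ℝ) := fun x hx => ht.trans hx.1
    have huIccsub : uIcc t s ⊆ Ici (0:ℝ) := by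
      rw [uIcc_of_le hts]; exact hIccsub
    have hconts : ContinuousOn (fun y => (π y - π' y) * W y) (Icc t s) :=
      ((hπc.sub hπ'c).mul hWc).mono hIccsub
    have hderiv : ∀ x ∈ Ioo t s, HasDerivWithinAt (fun y => (π y - π' y) * W y)
        (-((q x - q' x) * W x)) (Ioi x) x :=
      fun x hx => (hΦd x (lt_of_le_of_lt ht hx.1)).hasDerivWithinAt
    have hint : IntervalIntegrable (fun η => -((q η - q' η) * W η))
        MeasureTheory.volume t s :=
      (((hqc.sub hq'c).mul hWc).neg.mono huIccsub).intervalIntegrable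
    have hkey := intervalIntegral.integral_eq_sub_of_hasDeriv_right_of_le hts hconts hderiv hint
    rw [intervalIntegral.integral_neg] at hkey
    linarith [hkey]
  -- bound on the forcing integral
  have fW_bound : ∀ s, t ≤ s → |∫ η in t..s, (q η - q' η) * W η|
      ≤ c * W t * Real.exp (k*t) / (l-k) := by
    intro s hts
    have huIccsub : uIcc t s ⊆ Ici (0:ℝ) := by
      rw [uIcc_of_le hts]; exact fun x hx => ht.trans hx.1
    have h1 : |∫ η in t..s, (q η - q' η) * W η| ≤ ∫ η in t..s, |(q η - q' η) * W η| :=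
      intervalIntegral.abs_integral_le_integral_abs hts
    have h2 : ∫ η in t..s, |(q η - q' η) * W η|
        ≤ ∫ η in t..s, c * W t * Real.exp ((k-l)*η + l*t) := by
      refine intervalIntegral.integral_mono_on hts
        ((((hqc.sub hq'c).mul hWc).abs.mono huIccsub).intervalIntegrable)
        (Continuous.intervalIntegrable (by fun_prop) t s) ?_
      intro x hx
      have hx0 : (0:ℝ) ≤ x := ht.trans hx.1
      have hE1 : Real.exp (k*x) * Real.exp (-k*x) = 1 := by
        rw [← Real.exp_add]; simp
      have h4 := hqq' x hx0
      have hfq : |q x - q' x| ≤ c * Real.exp (k*x) := by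
        nlinarith [Real.exp_pos (k*x), abs_nonneg (q x - q' x)]
      have hWx : W x ≤ W t * Real.exp (-l*(x-t)) := hWdecay t x ht hx.1
      show |(q x - q' x) * W x| ≤ c * W t * Real.exp ((k-l)*x + l*t)
      rw [abs_mul, abs_of_nonneg (hWpos x).le]
      calc |q x - q' x| * W x ≤ (c * Real.exp (k*x)) * (W t * Real.exp (-l*(x-t))) :=
            mul_le_mul hfq hWx (hWpos x).le (by positivity)
        _ = c * W t * (Real.exp (k*x) * Real.exp (-l*(x-t))) := by ring
        _ = c * W t * Real.exp ((k-l)*x + l*t) := by rw [← Real.exp_add]; ring_nf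
    have hF : ∀ η : ℝ, HasDerivAt (fun y => (1/(k-l)) * Real.exp ((k-l)*y + l*t))
        (Real.exp ((k-l)*η + l*t)) η := by
      intro η
      have ha1 : HasDerivAt (fun y : ℝ => (k-l)*y + l*t) (k-l) η := by
        simpa using ((hasDerivAt_id η).const_mul (k-l)).add_const (l*t)
      have ha2 := (ha1.exp).const_mul (1/(k-l))
      refine ha2.congr_deriv ?_
      rw [mul_comm (Real.exp _) (k-l), ← mul_assoc, one_div_mul_cancel (show k - l ≠ 0 by linarith), one_mul]
    have hcomp : ∫ η in t..s, Real.exp ((k-l)*η + l*t)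
        = (1/(k-l)) * Real.exp ((k-l)*s + l*t) - (1/(k-l)) * Real.exp ((k-l)*t + l*t) :=
      intervalIntegral.integral_eq_sub_of_hasDerivAt (fun x _ => hF x)
        (Continuous.intervalIntegrable (by fun_prop) t s)
    have h6 : ∫ η in t..s, c * W t * Real.exp ((k-l)*η + l*t)
        = c * W t * ((1/(k-l)) * Real.exp ((k-l)*s + l*t)
          - (1/(k-l)) * Real.exp ((k-l)*t + l*t)) := by
      rw [← hcomp, ← intervalIntegral.integral_const_mul]
    have h7 : (1/(k-l)) * Real.exp ((k-l)*s + l*t) - (1/(k-l)) * Real.exp ((k-l)*t + l*t)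
        ≤ Real.exp (k*t) / (l-k) := by
      have he1 : (k-l)*t + l*t = k*t := by ring
      rw [he1]
      have hkl : (1:ℝ)/(k-l) = -(l-k)⁻¹ := by
        rw [one_div, show k-l = -(l-k) by ring, inv_neg]
      rw [hkl, div_eq_mul_inv]
      have hpos : (0:ℝ) < (l-k)⁻¹ := inv_pos.mpr hlk
      have he2 := Real.exp_pos ((k-l)*s + l*t)
      nlinarith
    calc |∫ η in t..s, (q η - q' η) * W η| ≤ ∫ η in t..s, |(q η - q' η) * W η| := h1
      _ ≤ ∫ η in t..s, c * W t * Real.exp ((k-l)*η + l*t) := h2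
      _ = c * W t * ((1/(k-l)) * Real.exp ((k-l)*s + l*t)
          - (1/(k-l)) * Real.exp ((k-l)*t + l*t)) := h6
      _ ≤ c * W t * (Real.exp (k*t) / (l-k)) := by
          refine mul_le_mul_of_nonneg_left h7 ?_
          positivity
      _ = c * W t * Real.exp (k*t) / (l-k) := by ring
    -- tail bounds from linear growth
  have hVint : IntegrableOn (fun η => Real.exp (-l*η) * (C*(1+η) + q0)) (Ioi 0) :=
    V_integrable l C q0 hl0 hC.le hq0.le
  have hV'int : IntegrableOn (fun η => Real.exp (-l*η) * (C'*(1+η) + q0)) (Ioi 0) :=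
    V_integrable l C' q0 hl0 hC'.le hq0.le
  have hπgrow : ∀ s : ℝ, 0 ≤ s → Real.exp (-l*s) * π s
      ≤ ∫ η in Ioi s, Real.exp (-l*η) * (C*(1+η) + q0) := by
    intro s hs
    refine key_growth l (fun τ => l + β * π τ) (fun η => q η + q0)
      (fun η => C*(1+η) + q0) π ?_ hgc ?_ ?_ hVint hInt heq hs
    · intro x hx
      have := mul_nonneg hβ0.le (hπnn x hx)
      show l ≤ l + β * π x
      linarith
    · intro x hx; have := hCq x hx; show q x + q0 ≤ C*(1+x) + q0; linarith
    · intro x hx; have := hqnn x hx; show 0 ≤ q x + q0; linarith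
  have hπ'grow : ∀ s : ℝ, 0 ≤ s → Real.exp (-l*s) * π' s
      ≤ ∫ η in Ioi s, Real.exp (-l*η) * (C'*(1+η) + q0) := by
    intro s hs
    refine key_growth l (fun τ => l + β * π' τ) (fun η => q' η + q0)
      (fun η => C'*(1+η) + q0) π' ?_ hg'c ?_ ?_ hV'int hInt' heq' hs
    · intro x hx
      have := mul_nonneg hβ0.le (hπ'nn x hx)
      show l ≤ l + β * π' x
      linarith
    · intro x hx; have := hC'q x hx; show q' x + q0 ≤ C'*(1+x) + q0; linarith
    · intro x hx; have := hq'nn x hx; show 0 ≤ q' x + q0; linarith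
  set T : ℝ → ℝ := fun s => ∫ η in Ioi s, Real.exp (-l*η) * (C*(1+η) + q0) with hTdef
  set T' : ℝ → ℝ := fun s => ∫ η in Ioi s, Real.exp (-l*η) * (C'*(1+η) + q0) with hT'def
  have hTtend : Filter.Tendsto T Filter.atTop (nhds 0) := tendsto_tail hVint
  have hT'tend : Filter.Tendsto T' Filter.atTop (nhds 0) := tendsto_tail hV'int
  -- the main bound, for every s ≥ t
  have main : ∀ s, t ≤ s → |π t - π' t|
      ≤ c * Real.exp (k*t) / (l-k) + Real.exp (l*t) * (T s + T' s) := by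
    intro s hts
    have hs0 : (0:ℝ) ≤ s := ht.trans hts
    have h1 : |(π t - π' t) * W t| ≤ |(π s - π' s) * W s| + |∫ η in t..s, (q η - q' η) * W η| := by
      rw [hid s hts]; exact abs_add_le _ _
    have h2 : |(π s - π' s) * W s| ≤ (π s + π' s) * W s := by
      rw [abs_mul, abs_of_nonneg (hWpos s).le]
      refine mul_le_mul_of_nonneg_right ?_ (hWpos s).le
      calc |π s - π' s| ≤ |π s| + |π' s| := abs_sub _ _
        _ = π s + π' s := by rw [abs_of_nonneg (hπnn s hs0), abs_of_nonneg (hπ'nn s hs0)]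
    have h3 : (π s + π' s) * W s ≤ W t * (Real.exp (l*t) * (T s + T' s)) := by
      have hWs : W s ≤ W t * Real.exp (-l*(s-t)) := hWdecay t s ht hts
      have hsum : Real.exp (-l*s) * (π s + π' s) ≤ T s + T' s := by
        have := hπgrow s hs0
        have := hπ'grow s hs0
        rw [hTdef, hT'def]
        dsimp only
        nlinarith [Real.exp_pos (-l*s)]
      have hexp : Real.exp (-l*(s-t)) = Real.exp (l*t) * Real.exp (-l*s) := by
        rw [← Real.exp_add]; ring_nf
      have hπsum0 : 0 ≤ π s + π' s := add_nonneg (hπnn s hs0) (hπ'nn s hs0)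
      calc (π s + π' s) * W s ≤ (π s + π' s) * (W t * Real.exp (-l*(s-t))) :=
            mul_le_mul_of_nonneg_left hWs hπsum0
        _ = (W t * Real.exp (l*t)) * (Real.exp (-l*s) * (π s + π' s)) := by
            rw [hexp]; ring
        _ ≤ (W t * Real.exp (l*t)) * (T s + T' s) := by
            refine mul_le_mul_of_nonneg_left hsum ?_
            positivity
        _ = W t * (Real.exp (l*t) * (T s + T' s)) := by ring
    have h4 := fW_bound s hts
    have h5 : |π t - π' t| * W t
        ≤ (c * Real.exp (k*t) / (l-k) + Real.exp (l*t) * (T s + T' s)) * W t := by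
      have habs : |(π t - π' t) * W t| = |π t - π' t| * W t := by
        rw [abs_mul, abs_of_nonneg (hWpos t).le]
      rw [← habs]
      calc |(π t - π' t) * W t|
          ≤ |(π s - π' s) * W s| + |∫ η in t..s, (q η - q' η) * W η| := h1
        _ ≤ W t * (Real.exp (l*t) * (T s + T' s)) + c * W t * Real.exp (k*t) / (l-k) := by
            linarith [h2.trans h3]
        _ = (c * Real.exp (k*t) / (l-k) + Real.exp (l*t) * (T s + T' s)) * W t := by ring
    exact le_of_mul_le_mul_right h5 (hWpos t)
  -- pass to the limit s → ∞
  have hlim : Filter.Tendsto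
      (fun s => c * Real.exp (k*t) / (l-k) + Real.exp (l*t) * (T s + T' s))
      Filter.atTop (nhds (c * Real.exp (k*t) / (l-k) + Real.exp (l*t) * (0 + 0))) :=
    tendsto_const_nhds.add (tendsto_const_nhds.mul (hTtend.add hT'tend))
  have hfin : |π t - π' t| ≤ c * Real.exp (k*t) / (l-k) := by
    have h6 := ge_of_tendsto hlim (Filter.eventually_atTop.mpr ⟨t, fun s hs => main s hs⟩)
    simpa using h6
  have h7 : Real.exp (-k*t) * |π t - π' t| ≤ Real.exp (-k*t) * (c * Real.exp (k*t) / (l-k)) :=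
    mul_le_mul_of_nonneg_left hfin (Real.exp_pos _).le
  have h8 : Real.exp (-k*t) * (c * Real.exp (k*t) / (l-k)) = c / (l-k) := by
    have h9 : Real.exp (-k*t) * Real.exp (k*t) = 1 := by rw [← Real.exp_add]; simp
    rw [mul_div_assoc', ← mul_assoc, mul_comm (Real.exp (-k*t)) c, mul_assoc, h9, mul_one]
  calc Real.exp (-k*t) * |π t - π' t| ≤ Real.exp (-k*t) * (c * Real.exp (k*t) / (l-k)) := h7
    _ = c / (l-k) := h8
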